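/- Fix a constant γ > 1. If p = p(n) satisfies np ≤ γ, then there exists ε = ε(γ) > 0 such that with high probability the Erdős–Rényi random graph G(n,p) contains no connected subgraph on at most ε·ln(n) vertices whose number of edges exceeds its number of vertices. -/

import Mathlib

open SimpleGraph Filter MeasureTheory
open scoped ENNReal

/-- The Erdős–Rényi measure on edge-indicator functions: each pair of vertices is an edge
independently with probability `p` (here `p ≤ 1` in all uses; `min p 1` only guards the
definition). -/
noncomputable def erMeasure (n : ℕ) (p : ℝ≥0∞) : Measure (Sym2 (Fin n) → Bool) :=
  Measure.pi fun _ => (PMF.bernoulli (min p 1).toNNReal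
    ((ENNReal.toNNReal_mono ENNReal.one_ne_top (min_le_right p 1)).trans_eq ENNReal.toNNReal_one)).toMeasure

/-- The random graph determined by an edge-indicator function `ω`. -/
def sampleGraph (n : ℕ) (ω : Sym2 (Fin n) → Bool) : SimpleGraph (Fin n) :=
  SimpleGraph.fromRel fun u v => ω s(u, v) = true

instance erMeasure_isProbabilityMeasure (n : ℕ) (p : ℝ≥0∞) :
    IsProbabilityMeasure (erMeasure n p) := by
  unfold erMeasure; infer_instance

abbrev CfgData (m : ℕ) := (Fin m → Fin m) × Sym2 (Fin m) × Sym2 (Fin m)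

def cfgF (n m : ℕ) (S : Finset (Fin n)) (c : CfgData m) : Finset (Sym2 (Fin n)) :=
  if h : S.card = m then
    ((Finset.univ.filter fun i => c.1 i ≠ i).image
        fun i => s(S.orderEmbOfFin h i, S.orderEmbOfFin h (c.1 i)))
      ∪ {c.2.1.map (S.orderEmbOfFin h), c.2.2.map (S.orderEmbOfFin h)}
  else ∅

def fam (n m : ℕ) : Finset (Finset (Sym2 (Fin n))) :=
  ((Finset.powersetCard m Finset.univ ×ˢ (Finset.univ : Finset (CfgData m))).image
      fun c => cfgF n m c.1 c.2).filter fun F => F.card = m + 1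

lemma exists_adj_dist_lt {V : Type*} {G : SimpleGraph V} (hc : G.Connected) (r v : V)
    (hv : v ≠ r) : ∃ w, G.Adj v w ∧ G.dist w r < G.dist v r := by
  obtain ⟨p, hp⟩ := (hc v r).exists_walk_length_eq_dist
  cases p with
  | nil => exact absurd rfl hv
  | @cons _ w _ h q =>
    refine ⟨w, h, ?_⟩
    have h1 : G.dist w r ≤ q.length := SimpleGraph.dist_le q
    rw [SimpleGraph.Walk.length_cons] at hp
    omega

lemma exists_cfg {n : ℕ} {ω : Sym2 (Fin n) → Bool} (Hs : (sampleGraph n ω).Subgraph)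
    (hc : Hs.Connected) (he : Hs.verts.ncard + 1 ≤ Nat.card Hs.edgeSet) :
    ∃ F ∈ fam n Hs.verts.ncard, ∀ e ∈ F, ω e = true := by
  classical
  set m := Hs.verts.ncard with hm
  have hVfin : Hs.verts.Finite := Set.toFinite _
  set S : Finset (Fin n) := hVfin.toFinset with hS
  have hScard : S.card = m := (Set.ncard_eq_toFinset_card _ hVfin).symm
  set v : Fin m → Fin n := fun i => S.orderEmbOfFin hScard i with hv
  have hvinj : Function.Injective v := (S.orderEmbOfFin hScard).injective
  have hvmem : ∀ i, v i ∈ Hs.verts := fun i =>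
    (Set.Finite.mem_toFinset hVfin).mp (S.orderEmbOfFin_mem hScard i)
  have hrange : ∀ x : Hs.verts, ∃ i, v i = (x : Fin n) := by
    intro x
    have hx : (x : Fin n) ∈ S := (Set.Finite.mem_toFinset hVfin).mpr x.2
    have hx2 : (x : Fin n) ∈ Set.range ⇑(S.orderEmbOfFin hScard) := by
      rw [S.range_orderEmbOfFin hScard]
      exact hx
    obtain ⟨i, hi⟩ := hx2
    exact ⟨i, hi⟩
  -- index function
  set idx : Hs.verts → Fin m := fun x => (hrange x).choose with hidxdef
  have hidx : ∀ x : Hs.verts, v (idx x) = (x : Fin n) := fun x => (hrange x).choose_spec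
  -- subtype vertex
  set X : ∀ i : Fin m, Hs.verts := fun i => ⟨v i, hvmem i⟩ with hXdef
  have hXv : ∀ i, (X i : Fin n) = v i := fun _ => rfl
  -- the coerced graph
  have hc' : Hs.coe.Connected := hc.coe
  obtain ⟨r, -⟩ : ∃ x : Hs.verts, True := ⟨⟨hc.nonempty.some, hc.nonempty.some_mem⟩, trivial⟩
  set d : Hs.verts → ℕ := fun x => Hs.coe.dist x r with hd
  have hpar : ∀ x : Hs.verts, x ≠ r → ∃ y, Hs.coe.Adj x y ∧ d y < d x := fun x hx =>
    exists_adj_dist_lt hc' r x hx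
  set par : ∀ x : Hs.verts, Hs.verts := fun x =>
    if hx : x = r then x else (hpar x hx).choose with hpardef
  have hparadj : ∀ x (hx : x ≠ r), Hs.coe.Adj x (par x) := by
    intro x hx
    rw [hpardef]
    simp only [hx, dif_neg, not_false_iff]
    exact (hpar x hx).choose_spec.1
  have hpard : ∀ x (hx : x ≠ r), d (par x) < d x := by
    intro x hx
    rw [hpardef]
    simp only [hx, dif_neg, not_false_iff]
    exact (hpar x hx).choose_spec.2
  -- the parent map on indices
  set g : Fin m → Fin m := fun i => idx (par (X i)) with hg
  have hXg : ∀ i, X (g i) = par (X i) := by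
    intro i
    apply Subtype.ext
    rw [hXv, hg, hidx]
  have hgr : ∀ i, X i ≠ r → g i ≠ i := by
    intro i hi hcon
    have : X i = par (X i) := by rw [← hXg, hcon]
    exact (hparadj (X i) hi).ne (by rw [← this])
  have hidx2 : ∀ i, idx (X i) = i := fun i => hvinj (by rw [hidx, hXv])
  set ir : Fin m := idx r with hir
  have hXir : X ir = r := Subtype.ext (by rw [hXv, hir, hidx])
  have hXeq : ∀ i, X i = r ↔ i = ir := by
    intro i
    constructor
    · intro h; rw [← hidx2 i, h]
    · intro h; rw [h, hXir]
  have hgiff : ∀ i, g i ≠ i ↔ i ≠ ir := by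
    intro i
    constructor
    · intro h hcon
      apply h
      rw [hcon]
      show idx (par (X ir)) = ir
      have hpr : par r = r := by rw [hpardef]; simp
      rw [hXir, hpr]
    · intro h
      exact hgr i (fun hX => h ((hXeq i).mp hX))
  have hgd : ∀ i, i ≠ ir → d (X (g i)) < d (X i) := by
    intro i hi
    rw [hXg]
    exact hpard (X i) (fun hX => hi ((hXeq i).mp hX))
  set T : Finset (Sym2 (Fin n)) :=
    (Finset.univ.filter fun i => g i ≠ i).image fun i => s(v i, v (g i)) with hT
  have hinj : Set.InjOn (fun i => s(v i, v (g i)))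
      ↑(Finset.univ.filter fun i => g i ≠ i) := by
    intro i hi j hj hij
    simp only [Finset.coe_filter, Set.mem_setOf_eq, Finset.mem_univ, true_and] at hi hj
    rw [Sym2.eq_iff] at hij
    rcases hij with ⟨h1, h2⟩ | ⟨h1, h2⟩
    · exact hvinj h1
    · exfalso
      have hi' := (hgiff i).mp hi
      have hj' := (hgiff j).mp hj
      have e1 : i = g j := hvinj h1
      have e2 : g i = j := hvinj h2
      have d1 := hgd i hi'
      have d2 := hgd j hj'
      rw [e2] at d1
      rw [← e1] at d2
      omega
  have hTcard : T.card = m - 1 := by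
    rw [hT, Finset.card_image_of_injOn hinj]
    have : (Finset.univ.filter fun i => g i ≠ i) = Finset.univ.erase ir := by
      ext i
      simp [hgiff i, Finset.mem_erase]
    rw [this, Finset.card_erase_of_mem (Finset.mem_univ _), Finset.card_univ, Fintype.card_fin]
  have hTsub : ∀ e ∈ T, e ∈ Hs.edgeSet := by
    intro e heT
    rw [hT, Finset.mem_image] at heT
    obtain ⟨i, hi, rfl⟩ := heT
    simp only [Finset.mem_filter, Finset.mem_univ, true_and] at hi
    have hadj : Hs.coe.Adj (X i) (X (g i)) := by
      rw [hXg]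
      exact hparadj (X i) (fun hX => (hgiff i).mp hi ((hXeq i).mp hX))
    rw [SimpleGraph.Subgraph.mem_edgeSet]
    exact hadj
  have hEfin : Hs.edgeSet.Finite := Set.toFinite _
  set E : Finset (Sym2 (Fin n)) := hEfin.toFinset with hE
  have hEcard : m + 1 ≤ E.card := by
    rwa [← Set.ncard_eq_toFinset_card _ hEfin, ← Nat.card_coe_set_eq]
  have hTE : T ⊆ E := fun e heT => (Set.Finite.mem_toFinset hEfin).mpr (hTsub e heT)
  have hsd : 1 < (E \ T).card := by
    have := Finset.card_sdiff_of_subset hTE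
    omega
  obtain ⟨e₁, he₁, e₂, he₂, hee⟩ := Finset.one_lt_card.mp hsd
  have he₁E : e₁ ∈ Hs.edgeSet := (Set.Finite.mem_toFinset hEfin).mp (Finset.mem_sdiff.mp he₁).1
  have he₂E : e₂ ∈ Hs.edgeSet := (Set.Finite.mem_toFinset hEfin).mp (Finset.mem_sdiff.mp he₂).1
  have he₁T : e₁ ∉ T := (Finset.mem_sdiff.mp he₁).2
  have he₂T : e₂ ∉ T := (Finset.mem_sdiff.mp he₂).2
  have hrep : ∀ e ∈ Hs.edgeSet, ∃ a : Sym2 (Fin m), a.map v = e := by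
    intro e heE
    induction e with
    | _ x y =>
      rw [SimpleGraph.Subgraph.mem_edgeSet] at heE
      have hx : x ∈ Hs.verts := Hs.edge_vert heE
      have hy : y ∈ Hs.verts := Hs.edge_vert heE.symm
      obtain ⟨i, hi⟩ := hrange ⟨x, hx⟩
      obtain ⟨j, hj⟩ := hrange ⟨y, hy⟩
      exact ⟨s(i, j), by rw [Sym2.map_pair_eq, hi, hj]⟩
  obtain ⟨a, ha⟩ := hrep e₁ he₁E
  obtain ⟨b, hb⟩ := hrep e₂ he₂E
  refine ⟨cfgF n m S (g, a, b), ?_, ?_⟩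
  · rw [fam, Finset.mem_filter]
    have hcfg : cfgF n m S (g, a, b) = T ∪ {e₁, e₂} := by
      rw [cfgF, dif_pos hScard, hT]
      congr 1
      rw [ha, hb]
    constructor
    · rw [Finset.mem_image]
      exact ⟨(S, (g, a, b)), Finset.mem_product.mpr
        ⟨Finset.mem_powersetCard_univ.mpr hScard, Finset.mem_univ _⟩, rfl⟩
    · rw [hcfg, Finset.card_union_of_disjoint, hTcard]
      · rw [Finset.card_insert_of_notMem (by simpa using hee), Finset.card_singleton]
        have hm1 : 1 ≤ m := Nat.pos_of_ne_zero (fun h => (h ▸ ir).elim0)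
        omega
      · rw [Finset.disjoint_insert_right, Finset.disjoint_singleton_right]
        exact ⟨he₁T, he₂T⟩
  · intro e heF
    rw [cfgF, dif_pos hScard] at heF
    have heE : e ∈ Hs.edgeSet := by
      rcases Finset.mem_union.mp heF with h | h
      · exact hTsub e h
      · rcases Finset.mem_insert.mp h with h | h
        · subst h; show Sym2.map v a ∈ Hs.edgeSet; rw [ha]; exact he₁E
        · have h' := Finset.mem_singleton.mp h; subst h'
          show Sym2.map v b ∈ Hs.edgeSet; rw [hb]; exact he₂E
    have heG : e ∈ (sampleGraph n ω).edgeSet := Hs.edgeSet_subset heE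
    induction e with
    | _ x y =>
      rw [SimpleGraph.mem_edgeSet, sampleGraph, SimpleGraph.fromRel_adj] at heG
      rcases heG.2 with h | h
      · exact h
      · rw [Sym2.eq_swap]; exact h

lemma fam_card_le (n m : ℕ) :
    (fam n m).card ≤ (n.choose m) * (m ^ m * (m + 1) ^ 4) := by
  classical
  refine le_trans (le_trans (Finset.card_filter_le _ _) Finset.card_image_le) ?_
  rw [Finset.card_product, Finset.card_powersetCard, Finset.card_univ, Finset.card_univ,
    Fintype.card_fin]
  gcongr
  rw [Fintype.card_prod, Fintype.card_prod, Fintype.card_fun]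
  have h2 : Fintype.card (Sym2 (Fin m)) ≤ (m + 1) ^ 2 := by
    rw [Sym2.card]
    simp only [Fintype.card_fin, Nat.choose_two_right]
    calc (m + 1) * m / 2 ≤ (m + 1) * m := Nat.div_le_self _ _
      _ ≤ (m + 1) * (m + 1) := by nlinarith
      _ = (m + 1) ^ 2 := (sq (m + 1)).symm
  simp only [Fintype.card_fin]
  calc m ^ m * (Fintype.card (Sym2 (Fin m)) * Fintype.card (Sym2 (Fin m)))
      ≤ m ^ m * ((m + 1) ^ 2 * (m + 1) ^ 2) := by gcongr
    _ = m ^ m * (m + 1) ^ 4 := by ring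

lemma erMeasure_cyl (n : ℕ) (p : ℝ≥0∞) (hp : p ≤ 1) (F : Finset (Sym2 (Fin n))) :
    erMeasure n p {ω | ∀ e ∈ F, ω e = true} = p ^ F.card := by
  have hmin : min p 1 = p := min_eq_left hp
  have hset : {ω : Sym2 (Fin n) → Bool | ∀ e ∈ F, ω e = true}
      = Set.pi Set.univ (fun e => if e ∈ F then ({true} : Set Bool) else Set.univ) := by
    ext ω
    simp only [Set.mem_setOf_eq, Set.mem_pi, Set.mem_univ, forall_true_left]
    constructor
    · intro h e
      by_cases he : e ∈ F <;> simp [he, h e]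
    · intro h e he
      have := h e
      simpa [he] using this
  rw [hset, erMeasure, Measure.pi_pi]
  have hone : ((PMF.bernoulli (min p 1).toNNReal
    ((ENNReal.toNNReal_mono ENNReal.one_ne_top (min_le_right p 1)).trans_eq ENNReal.toNNReal_one)).toMeasure : Measure Bool) Set.univ = 1 := by
    exact measure_univ
  have htrue : ((PMF.bernoulli (min p 1).toNNReal
    ((ENNReal.toNNReal_mono ENNReal.one_ne_top (min_le_right p 1)).trans_eq ENNReal.toNNReal_one)).toMeasure : Measure Bool) {true} = p := by
    rw [PMF.toMeasure_apply_singleton _ _ (measurableSet_singleton _), PMF.bernoulli_apply, hmin]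
    exact ENNReal.coe_toNNReal (ne_top_of_le_ne_top ENNReal.one_ne_top hp)
  have : ∀ e : Sym2 (Fin n),
      ((PMF.bernoulli (min p 1).toNNReal
    ((ENNReal.toNNReal_mono ENNReal.one_ne_top (min_le_right p 1)).trans_eq ENNReal.toNNReal_one)).toMeasure : Measure Bool)
        (if e ∈ F then ({true} : Set Bool) else Set.univ) = if e ∈ F then p else 1 := by
    intro e; by_cases he : e ∈ F <;> simp only [he, ↓reduceIte, htrue, hone]
  simp_rw [this]
  rw [Finset.prod_ite_mem, Finset.univ_inter, Finset.prod_const]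


lemma pow_self_le_exp_mul_factorial (m : ℕ) :
    (m : ℝ) ^ m ≤ Real.exp m * m.factorial := by
  induction m with
  | zero => simp
  | succ k ih =>
    rcases Nat.eq_zero_or_pos k with rfl | hk
    · have h1 : (1:ℝ) ≤ Real.exp 1 := by
        have := Real.add_one_le_exp (1:ℝ); linarith
      norm_num
    · have hk' : (0:ℝ) < k := by exact_mod_cast hk
      have h1 : (k:ℝ) + 1 ≤ k * Real.exp (1/k) := by
        have h := Real.add_one_le_exp (1/(k:ℝ))
        have := mul_le_mul_of_nonneg_left h hk'.le
        calc (k:ℝ) + 1 = k * (1/k + 1) := by field_simp; ring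
          _ ≤ k * Real.exp (1/k) := by
              exact mul_le_mul_of_nonneg_left h hk'.le
      have hexp : Real.exp (1/(k:ℝ)) ^ k = Real.exp 1 := by
        rw [← Real.exp_nat_mul]
        congr 1
        field_simp
      calc ((k+1 : ℕ) : ℝ) ^ (k+1) = ((k:ℝ)+1) * ((k:ℝ)+1) ^ k := by
            push_cast; ring
        _ ≤ ((k:ℝ)+1) * ((k:ℝ) * Real.exp (1/k)) ^ k := by
            have hb : (0:ℝ) ≤ (k:ℝ) + 1 := by positivity
            have h2 : ((k:ℝ)+1) ^ k ≤ ((k:ℝ) * Real.exp (1/k)) ^ k := by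
              apply pow_le_pow_left₀ (by positivity) h1 _
            exact mul_le_mul_of_nonneg_left h2 hb
        _ = ((k:ℝ)+1) * ((k:ℝ) ^ k * Real.exp 1) := by
            rw [mul_pow, hexp]
        _ ≤ ((k:ℝ)+1) * (Real.exp k * k.factorial * Real.exp 1) := by
            have hb : (0:ℝ) ≤ (k:ℝ) + 1 := by positivity
            have : (0:ℝ) ≤ Real.exp 1 := (Real.exp_pos 1).le
            apply mul_le_mul_of_nonneg_left _ hb
            exact mul_le_mul_of_nonneg_right ih this
        _ = Real.exp ((k+1:ℕ):ℝ) * ((k+1).factorial : ℝ) := by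
            rw [Nat.factorial_succ]
            push_cast
            rw [Real.exp_add]
            ring

lemma sum_bound (γ : ℝ) (hγ : 1 < γ) (n : ℕ) (hn : 1 ≤ n) :
    ∑ m ∈ Finset.range (⌊1/(2*(6 + Real.log γ)) * Real.log n⌋₊ + 1),
      ((n.choose m * m ^ m * (m+1)^4 : ℕ) : ℝ) * (γ / n) ^ (m+1)
      ≤ γ / Real.exp (Real.log n / 2) := by
  have hlog : 0 < Real.log γ := Real.log_pos hγ
  set L : ℝ := 6 + Real.log γ with hLdef
  have hL : (6:ℝ) < L := by simp [hLdef]; linarith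
  have hLpos : (0:ℝ) < L := by linarith
  set N : ℕ := ⌊1/(2*L) * Real.log n⌋₊ with hNdef
  have hγ0 : (0:ℝ) < γ := by linarith
  have hnpos : (0:ℝ) < n := by exact_mod_cast hn
  have hn1 : (1:ℝ) ≤ n := by exact_mod_cast hn
  have hlogn : 0 ≤ Real.log n := Real.log_nonneg hn1
  set B : ℝ := γ * (Real.exp 1 * γ) ^ N * ((N:ℝ)+1)^4 / n with hBdef
  have hterm : ∀ m ∈ Finset.range (N+1),
      ((n.choose m * m ^ m * (m+1)^4 : ℕ) : ℝ) * (γ / n) ^ (m+1) ≤ B := by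
    intro m hm
    rw [Finset.mem_range, Nat.lt_succ_iff] at hm
    have step1 : ((n.choose m : ℕ) : ℝ) * (m:ℝ)^m ≤ Real.exp m * (n:ℝ)^m := by
      have hnat : (m.factorial * n.choose m : ℕ) ≤ n ^ m := by
        rw [← Nat.descFactorial_eq_factorial_mul_choose]
        exact Nat.descFactorial_le_pow n m
      have hnat' : ((m.factorial : ℕ):ℝ) * (n.choose m : ℝ) ≤ (n:ℝ)^m := by
        exact_mod_cast hnat
      calc ((n.choose m : ℕ) : ℝ) * (m:ℝ)^m
          ≤ (n.choose m : ℝ) * (Real.exp m * m.factorial) := by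
            exact mul_le_mul_of_nonneg_left (pow_self_le_exp_mul_factorial m)
              (Nat.cast_nonneg _)
        _ = Real.exp m * ((m.factorial : ℝ) * (n.choose m : ℝ)) := by ring
        _ ≤ Real.exp m * (n:ℝ)^m := by
            exact mul_le_mul_of_nonneg_left hnat' (Real.exp_pos _).le
    have hgn : (γ / n) ^ (m+1) = γ^(m+1) / ((n:ℝ)^m * n) := by
      rw [div_pow, pow_succ (n:ℝ) m]
    have e1 : ((n.choose m * m ^ m * (m+1)^4 : ℕ) : ℝ) * (γ / n) ^ (m+1)
        = ((n.choose m : ℝ) * (m:ℝ)^m) * ((m:ℝ)+1)^4 * (γ^(m+1) / ((n:ℝ)^m * n)) := by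
      rw [hgn]; push_cast; ring
    rw [e1]
    have hb1 : ((n.choose m : ℝ) * (m:ℝ)^m) * ((m:ℝ)+1)^4 * (γ^(m+1) / ((n:ℝ)^m * n))
        ≤ (Real.exp m * (n:ℝ)^m) * ((m:ℝ)+1)^4 * (γ^(m+1) / ((n:ℝ)^m * n)) := by
      apply mul_le_mul_of_nonneg_right (mul_le_mul_of_nonneg_right step1 (by positivity))
      positivity
    refine hb1.trans ?_
    have e2 : (Real.exp m * (n:ℝ)^m) * ((m:ℝ)+1)^4 * (γ^(m+1) / ((n:ℝ)^m * n))
        = γ * (Real.exp 1 * γ)^m * ((m:ℝ)+1)^4 / n := by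
      rw [mul_pow, ← Real.exp_nat_mul, mul_one, pow_succ]
      field_simp
      ring
    rw [e2, hBdef]
    have hbase : (1:ℝ) ≤ Real.exp 1 * γ := by
      have h1 : (1:ℝ) ≤ Real.exp 1 := Real.one_le_exp (by norm_num)
      nlinarith
    have a1 : (Real.exp 1 * γ)^m ≤ (Real.exp 1 * γ)^N := pow_le_pow_right₀ hbase hm
    have a2 : ((m:ℝ)+1)^4 ≤ ((N:ℝ)+1)^4 := by
      have hmn : ((m:ℝ)+1) ≤ ((N:ℝ)+1) := by
        have : (m:ℝ) ≤ (N:ℝ) := by exact_mod_cast hm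
        linarith
      exact pow_le_pow_left₀ (by positivity) hmn 4
    have hbase0 : (0:ℝ) ≤ Real.exp 1 * γ := le_trans zero_le_one hbase
    gcongr
  have hsum : ∑ m ∈ Finset.range (N+1),
      ((n.choose m * m ^ m * (m+1)^4 : ℕ) : ℝ) * (γ / n) ^ (m+1) ≤ ((N:ℝ)+1) * B := by
    have := Finset.sum_le_card_nsmul (Finset.range (N+1)) _ B hterm
    rwa [Finset.card_range, nsmul_eq_mul, Nat.cast_succ] at this
  refine hsum.trans ?_
  -- now bound (N+1) * B
  have hNexp : ((N:ℝ)+1) ≤ Real.exp N := Real.add_one_le_exp N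
  have hExpγ : Real.exp 1 * γ = Real.exp (1 + Real.log γ) := by
    rw [Real.exp_add, Real.exp_log hγ0]
  have hNL : (N:ℝ) * L ≤ Real.log n / 2 := by
    have hfl : (N:ℝ) ≤ 1/(2*L) * Real.log n := Nat.floor_le (by positivity)
    calc (N:ℝ) * L ≤ (1/(2*L) * Real.log n) * L := by
          exact mul_le_mul_of_nonneg_right hfl hLpos.le
      _ = Real.log n / 2 := by field_simp
  have key : ((N:ℝ)+1) * B ≤ γ * Real.exp (Real.log n / 2) / n := by
    rw [hBdef]
    have h1 : ((N:ℝ)+1) * (γ * (Real.exp 1 * γ) ^ N * ((N:ℝ)+1)^4 / n)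
        = γ * (((N:ℝ)+1)^5 * (Real.exp 1 * γ) ^ N) / n := by ring
    rw [h1]
    have h2 : ((N:ℝ)+1)^5 * (Real.exp 1 * γ) ^ N ≤ Real.exp (Real.log n / 2) := by
      have h3 : ((N:ℝ)+1)^5 ≤ Real.exp N ^ 5 := by
        exact pow_le_pow_left₀ (by positivity) hNexp 5
      have h4 : (Real.exp 1 * γ) ^ N = Real.exp ((N:ℝ) * (1 + Real.log γ)) := by
        rw [hExpγ, ← Real.exp_nat_mul]
      have h5 : Real.exp (N:ℝ) ^ 5 = Real.exp (5 * (N:ℝ)) := by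
        rw [← Real.exp_nat_mul]; norm_num
      calc ((N:ℝ)+1)^5 * (Real.exp 1 * γ) ^ N
          ≤ Real.exp (N:ℝ) ^ 5 * Real.exp ((N:ℝ) * (1 + Real.log γ)) := by
            rw [h4]
            exact mul_le_mul_of_nonneg_right h3 (Real.exp_pos _).le
        _ = Real.exp (5 * (N:ℝ) + (N:ℝ) * (1 + Real.log γ)) := by
            rw [h5, ← Real.exp_add]
        _ = Real.exp ((N:ℝ) * L) := by
            congr 1
            rw [hLdef]
            ring
        _ ≤ Real.exp (Real.log n / 2) := Real.exp_le_exp.mpr hNL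
    gcongr
  refine key.trans ?_
  have hfin : Real.exp (Real.log n / 2) * Real.exp (Real.log n / 2) = n := by
    rw [← Real.exp_add, show Real.log n / 2 + Real.log n / 2 = Real.log n by ring]
    exact Real.exp_log hnpos
  have hEpos := Real.exp_pos (Real.log (n:ℝ) / 2)
  rw [div_le_div_iff₀ hnpos hEpos]
  apply le_of_eq
  calc γ * Real.exp (Real.log ↑n / 2) * Real.exp (Real.log ↑n / 2)
      = γ * (Real.exp (Real.log ↑n / 2) * Real.exp (Real.log ↑n / 2)) := by ring
    _ = γ * n := by rw [hfin]

/-- If `γ > 1` is a constant and `n·p(n) ≤ γ`, then there is `ε = ε(γ) > 0` such that with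
high probability `G(n, p)` contains no connected subgraph on at most `ε·ln n` vertices whose
number of edges exceeds its number of vertices. -/
theorem no_small_complex_subgraphs (γ : ℝ) (hγ : 1 < γ) (p : ℕ → ℝ≥0∞)
    (hp1 : ∀ n, p n ≤ 1) (hpγ : ∀ n : ℕ, p n * n ≤ ENNReal.ofReal γ) :
    ∃ ε : ℝ, 0 < ε ∧
      Tendsto
        (fun n : ℕ =>
          erMeasure n (p n)
            {ω | ∀ Hs : (sampleGraph n ω).Subgraph, Hs.Connected →
                (Hs.verts.ncard : ℝ) ≤ ε * Real.log n →
                Nat.card Hs.edgeSet ≤ Hs.verts.ncard})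
        atTop (nhds 1) := by
  have hγ0 : (0:ℝ) < γ := by linarith
  have hlogγ : 0 < Real.log γ := Real.log_pos hγ
  have hLpos : (0:ℝ) < 6 + Real.log γ := by linarith
  refine ⟨1/(2*(6 + Real.log γ)), by positivity, ?_⟩
  have key : ∀ n : ℕ, 1 ≤ n →
      1 - ENNReal.ofReal (γ / Real.exp (Real.log n / 2)) ≤
        erMeasure n (p n)
          {ω | ∀ Hs : (sampleGraph n ω).Subgraph, Hs.Connected →
              (Hs.verts.ncard : ℝ) ≤ 1/(2*(6 + Real.log γ)) * Real.log n →
              Nat.card Hs.edgeSet ≤ Hs.verts.ncard} := by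
    intro n hn
    have hnR : (0:ℝ) < n := by exact_mod_cast hn
    set μ := erMeasure n (p n) with hμ
    set G : Set (Sym2 (Fin n) → Bool) :=
      {ω | ∀ Hs : (sampleGraph n ω).Subgraph, Hs.Connected →
          (Hs.verts.ncard : ℝ) ≤ 1/(2*(6 + Real.log γ)) * Real.log n →
          Nat.card Hs.edgeSet ≤ Hs.verts.ncard} with hG
    set N : ℕ := ⌊1/(2*(6 + Real.log γ)) * Real.log n⌋₊ with hN
    set Bad : Set (Sym2 (Fin n) → Bool) :=
      ⋃ m ∈ Finset.range (N+1), ⋃ F ∈ fam n m, {ω | ∀ e ∈ F, ω e = true} with hBadDef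
    have hsub : Gᶜ ⊆ Bad := by
      intro ω hω
      simp only [hG, Set.mem_compl_iff, Set.mem_setOf_eq] at hω
      push_neg at hω
      obtain ⟨Hs, hc, hcard, hlt⟩ := hω
      have he : Hs.verts.ncard + 1 ≤ Nat.card Hs.edgeSet := hlt
      obtain ⟨F, hF, hall⟩ := exists_cfg Hs hc he
      have hmN : Hs.verts.ncard ∈ Finset.range (N+1) := by
        rw [Finset.mem_range, Nat.lt_succ_iff, hN]
        exact Nat.le_floor hcard
      exact Set.mem_biUnion hmN (Set.mem_biUnion hF hall)
    have hp : p n ≤ ENNReal.ofReal (γ / n) := by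
      have h := hpγ n
      have hn0 : ((n:ℝ≥0∞)) ≠ 0 := Nat.cast_ne_zero.mpr (by omega)
      have hnt : ((n:ℝ≥0∞)) ≠ ∞ := ENNReal.natCast_ne_top n
      have h2 : p n ≤ ENNReal.ofReal γ / (n:ℝ≥0∞) :=
        (ENNReal.le_div_iff_mul_le (Or.inl hn0) (Or.inl hnt)).mpr h
      rw [ENNReal.ofReal_div_of_pos hnR, ENNReal.ofReal_natCast]
      exact h2
    have hBad : μ Bad ≤ ENNReal.ofReal (γ / Real.exp (Real.log n / 2)) := by
      have h1 : μ Bad ≤ ∑ m ∈ Finset.range (N+1), ∑ F ∈ fam n m,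
          μ {ω | ∀ e ∈ F, ω e = true} :=
        le_trans (measure_biUnion_finset_le _ _)
          (Finset.sum_le_sum fun m _ => measure_biUnion_finset_le _ _)
      have h3 : ∀ m ∈ Finset.range (N+1), ∑ F ∈ fam n m, μ {ω | ∀ e ∈ F, ω e = true}
          ≤ ENNReal.ofReal (((n.choose m * m ^ m * (m+1)^4 : ℕ) : ℝ) * (γ/n)^(m+1)) := by
        intro m _
        have hconst : ∑ F ∈ fam n m, μ {ω | ∀ e ∈ F, ω e = true}
            = (fam n m).card • (p n)^(m+1) := by
          rw [Finset.sum_congr rfl (fun F hF => ?_), Finset.sum_const]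
          rw [hμ, erMeasure_cyl n (p n) (hp1 n) F,
            (Finset.mem_filter.mp hF).2]
        rw [hconst, nsmul_eq_mul]
        have hnn : (0:ℝ) ≤ γ / n := div_nonneg hγ0.le (Nat.cast_nonneg n)
        calc ((fam n m).card : ℝ≥0∞) * (p n)^(m+1)
            ≤ ((n.choose m * m ^ m * (m+1)^4 : ℕ) : ℝ≥0∞)
                * (ENNReal.ofReal (γ/n))^(m+1) := by
              gcongr
              · have hcc : (fam n m).card ≤ n.choose m * m ^ m * (m+1)^4 := by
                  rw [mul_assoc]; exact fam_card_le n m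
                exact_mod_cast hcc
          _ = ENNReal.ofReal (((n.choose m * m ^ m * (m+1)^4 : ℕ) : ℝ) * (γ/n)^(m+1)) := by
              rw [← ENNReal.ofReal_pow hnn,
                ← ENNReal.ofReal_natCast (n.choose m * m ^ m * (m+1)^4),
                ← ENNReal.ofReal_mul (Nat.cast_nonneg _)]
      calc μ Bad ≤ ∑ m ∈ Finset.range (N+1), ∑ F ∈ fam n m,
            μ {ω | ∀ e ∈ F, ω e = true} := h1
        _ ≤ ∑ m ∈ Finset.range (N+1),
            ENNReal.ofReal (((n.choose m * m ^ m * (m+1)^4 : ℕ) : ℝ) * (γ/n)^(m+1)) :=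
              Finset.sum_le_sum h3
        _ = ENNReal.ofReal (∑ m ∈ Finset.range (N+1),
            ((n.choose m * m ^ m * (m+1)^4 : ℕ) : ℝ) * (γ/n)^(m+1)) := by
              rw [ENNReal.ofReal_sum_of_nonneg]
              intro i _
              have hnn : (0:ℝ) ≤ γ / n := div_nonneg hγ0.le (Nat.cast_nonneg n)
              positivity
        _ ≤ ENNReal.ofReal (γ / Real.exp (Real.log n / 2)) :=
              ENNReal.ofReal_le_ofReal (sum_bound γ hγ n hn)
    have h6 : (1:ℝ≥0∞) ≤ μ G + ENNReal.ofReal (γ / Real.exp (Real.log n / 2)) := by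
      calc (1:ℝ≥0∞) = μ Set.univ := measure_univ.symm
        _ = μ (G ∪ Gᶜ) := by rw [Set.union_compl_self]
        _ ≤ μ G + μ Gᶜ := measure_union_le _ _
        _ ≤ μ G + ENNReal.ofReal (γ / Real.exp (Real.log n / 2)) := by
            gcongr
            exact (measure_mono hsub).trans hBad
    exact tsub_le_iff_right.mpr h6
  have hb0 : Tendsto (fun n:ℕ => γ / Real.exp (Real.log n / 2)) atTop (nhds 0) := by
    apply Tendsto.div_atTop tendsto_const_nhds
    apply Real.tendsto_exp_atTop.comp
    apply Tendsto.atTop_div_const (by norm_num : (0:ℝ) < 2)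
    exact Real.tendsto_log_atTop.comp tendsto_natCast_atTop_atTop
  have hlow : Tendsto (fun n:ℕ => 1 - ENNReal.ofReal (γ / Real.exp (Real.log n / 2)))
      atTop (nhds 1) := by
    have h := ENNReal.tendsto_ofReal (a := 0) hb0
    rw [ENNReal.ofReal_zero] at h
    have h2 := ENNReal.Tendsto.sub (tendsto_const_nhds (x := (1:ℝ≥0∞)))
      h (Or.inl ENNReal.one_ne_top)
    simpa using h2
  refine tendsto_of_tendsto_of_tendsto_of_le_of_le' hlow tendsto_const_nhds ?_ ?_
  · filter_upwards [eventually_ge_atTop 1] with n hn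
    exact key n hn
  · filter_upwards with n
    exact prob_le_one
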